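/- Let λ ∈ ℕ^{N+n} be a cuttable partition. Then the map μ ↦ μ^{♮↓} is a bijection between { μ ∈ ℕ^{N+n} : λ ≥_m μ ≥_{n-m} λ^↓ } and { ν ∈ ℕ^N : λ^{♮↓} ≥_m ν ≥_{n-m} λ^{♮↓↓} }. -/
import Mathlib


/-- Extension of a finite tuple by zero. -/
def extZ {N : ℕ} (f : Fin N → ℕ) (j : ℕ) : ℕ := if h : j < N then f ⟨j, h⟩ else 0

/-- The interlacing relation `α ≥_p β`, i.e. `α_i ≥ β_i ≥ α_{i+p}` for all `i`
(entries beyond the length being zero). -/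
def Interlace (p : ℕ) (α β : ℕ → ℕ) : Prop := ∀ j : ℕ, β j ≤ α j ∧ α (j + p) ≤ β j

/-- Admissibility of a partition. -/
def IsAdmissible (M n k : ℕ) (lam : Fin M → ℕ) : Prop :=
  Antitone lam ∧ (∀ i, k ≤ lam i) ∧
    ∀ i : Fin M, ∀ h : (i : ℕ) + n < M, lam ⟨(i : ℕ) + n, h⟩ + k ≤ lam i

/-- Cuttability of a partition of length `N + n`. -/
def IsCuttable (N n k : ℕ) (lam : Fin (N + n) → ℕ) : Prop :=
  IsAdmissible (N + n) n k lam ∧ ∀ h : N < N + n, lam ⟨N, h⟩ = k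

lemma extZ_lt {N : ℕ} (f : Fin N → ℕ) {j : ℕ} (h : j < N) : extZ f j = f ⟨j, h⟩ :=
  dif_pos h

lemma extZ_ge {N : ℕ} (f : Fin N → ℕ) {j : ℕ} (h : ¬ j < N) : extZ f j = 0 :=
  dif_neg h

/-- For a cuttable `λ ∈ ℕ^{N+n}`, the map `μ ↦ μ^{♮↓}` is a bijection
between `{μ ∈ ℕ^{N+n} : λ ≥_m μ ≥_{n-m} λ↓}` and
`{ν ∈ ℕ^N : λ^{♮↓} ≥_m ν ≥_{n-m} λ^{♮↓↓}}`. -/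
theorem statement8 (N n k m : ℕ) (hm : 1 ≤ m) (hmn : m ≤ n) (hk : 1 ≤ k)
    (lam : Fin (N + n) → ℕ) (hcut : IsCuttable N n k lam) :
    Set.BijOn (fun (mu : Fin (N + n) → ℕ) (i : Fin N) => mu (Fin.castAdd n i) - k)
      {mu | Antitone mu ∧ Interlace m (extZ lam) (extZ mu) ∧
        Interlace (n - m) (extZ mu) (extZ fun i => lam i - k)}
      {nu | Antitone nu ∧
        Interlace m (extZ fun i : Fin N => lam (Fin.castAdd n i) - k) (extZ nu) ∧
        Interlace (n - m) (extZ nu) (extZ fun i : Fin N => lam (Fin.castAdd n i) - k - k)} := by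
  obtain ⟨⟨hA, hkle, hstep⟩, hNk⟩ := hcut
  have hn : 1 ≤ n := hm.trans hmn
  have hNlt : N < N + n := by omega
  have hNkk : lam ⟨N, hNlt⟩ = k := hNk hNlt
  set L : ℕ → ℕ := extZ lam with hL
  have hLval : ∀ j (h : j < N + n), L j = lam ⟨j, h⟩ := fun j h => dif_pos h
  have hLhi : ∀ j, N + n ≤ j → L j = 0 := fun j h => dif_neg (by omega)
  have hLmid : ∀ j, N ≤ j → j < N + n → L j = k := by
    intro j h1 h2
    rw [hLval j h2]
    refine le_antisymm ?_ (hkle _)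
    calc lam ⟨j, h2⟩ ≤ lam ⟨N, hNlt⟩ := hA (by simp [Fin.le_def, h1])
      _ = k := hNkk
  have hL2k : ∀ j, j < N → 2 * k ≤ L j := by
    intro j hj
    have h2 : j < N + n := by omega
    have h3 : j + n < N + n := by omega
    have hs : lam ⟨j + n, h3⟩ + k ≤ lam ⟨j, h2⟩ := hstep ⟨j, h2⟩ h3
    have hg := hkle (⟨j + n, h3⟩ : Fin (N + n))
    rw [hLval j h2]
    omega
  have hLge : ∀ j, j < N + n → k ≤ L j := by
    intro j hj
    by_cases h : j < N
    · have := hL2k j h; omega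
    · rw [hLmid j (by omega) hj]
  -- rewrite the three "shifted" tuples in terms of L
  have hdown : (extZ fun i : Fin (N + n) => lam i - k) = fun j => L j - k := by
    funext j
    by_cases h : j < N + n
    · rw [extZ_lt _ h, hLval j h]
    · rw [extZ_ge _ h, hLhi j (by omega)]
      omega
  have hcut1 : (extZ fun i : Fin N => lam (Fin.castAdd n i) - k) = fun j => L j - k := by
    funext j
    by_cases h : j < N
    · rw [extZ_lt _ h, hLval j (by omega)]
      rfl
    · rw [extZ_ge _ h]
      by_cases h2 : j < N + n
      · rw [hLmid j (by omega) h2]; omega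
      · rw [hLhi j (by omega)]; omega
  have hcut2 : (extZ fun i : Fin N => lam (Fin.castAdd n i) - k - k)
      = fun j => L j - k - k := by
    funext j
    by_cases h : j < N
    · rw [extZ_lt _ h, hLval j (by omega)]
      rfl
    · rw [extZ_ge _ h]
      by_cases h2 : j < N + n
      · rw [hLmid j (by omega) h2]; omega
      · rw [hLhi j (by omega)]; omega
  rw [hdown, hcut1, hcut2]
  -- basic consequences for a member μ of the source set
  have muk : ∀ mu : Fin (N + n) → ℕ, Interlace m L (extZ mu) →
      Interlace (n - m) (extZ mu) (fun j => L j - k) →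
      (∀ j, j < N + n - m → k ≤ extZ mu j) ∧ (∀ j, N ≤ j → extZ mu j ≤ k) ∧
      (∀ j, N + n - m ≤ j → extZ mu j = 0) := by
    intro mu h1 h2
    refine ⟨?_, ?_, ?_⟩
    · intro j hj
      have := (h1 j).2
      have := hLge (j + m) (by omega)
      omega
    · intro j hj
      by_cases h : j < N + n
      · have := (h1 j).1
        have := hLmid j hj h
        omega
      · rw [extZ_ge mu h]; omega
    · intro j hj
      by_cases h : j < N + n
      · have h2' : extZ mu (j - (n - m) + (n - m)) ≤ L (j - (n - m)) - k :=
          (h2 (j - (n - m))).2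
        have hje : j - (n - m) + (n - m) = j := by omega
        rw [hje] at h2'
        have := hLmid (j - (n - m)) (by omega) (by omega)
        omega
      · exact extZ_ge mu h
  refine ⟨?_, ?_, ?_⟩
  · -- MapsTo
    intro mu hmu
    obtain ⟨ha, h1, h2⟩ := hmu
    obtain ⟨mk1, mk2, mk3⟩ := muk mu h1 h2
    have hEnu : (extZ fun i : Fin N => mu (Fin.castAdd n i) - k)
        = fun j => extZ mu j - k := by
      funext j
      by_cases hj : j < N
      · rw [extZ_lt _ hj, extZ_lt mu (show j < N + n by omega)]
        rfl
      · rw [extZ_ge _ hj]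
        by_cases hj2 : j < N + n
        · have := mk2 j (by omega)
          omega
        · rw [extZ_ge mu hj2]
          omega
    refine ⟨?_, ?_, ?_⟩
    · intro i j hij
      have hmono : mu (Fin.castAdd n j) ≤ mu (Fin.castAdd n i) :=
        ha (show Fin.castAdd n i ≤ Fin.castAdd n j from hij)
      show mu (Fin.castAdd n j) - k ≤ mu (Fin.castAdd n i) - k
      omega
    · show Interlace m (fun j => L j - k) (extZ fun i : Fin N => mu (Fin.castAdd n i) - k)
      rw [hEnu]
      intro j
      exact ⟨Nat.sub_le_sub_right (h1 j).1 k, Nat.sub_le_sub_right (h1 j).2 k⟩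
    · show Interlace (n - m) (extZ fun i : Fin N => mu (Fin.castAdd n i) - k)
        (fun j => L j - k - k)
      rw [hEnu]
      intro j
      exact ⟨Nat.sub_le_sub_right (h2 j).1 k, Nat.sub_le_sub_right (h2 j).2 k⟩
  · -- InjOn
    intro mu hmu mu' hmu' heq
    obtain ⟨ha, h1, h2⟩ := hmu
    obtain ⟨ha', h1', h2'⟩ := hmu'
    obtain ⟨mk1, mk2, mk3⟩ := muk mu h1 h2
    obtain ⟨mk1', mk2', mk3'⟩ := muk mu' h1' h2'
    funext i
    by_cases hi : (i : ℕ) < N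
    · have heq' : mu (Fin.castAdd n ⟨(i : ℕ), hi⟩) - k
          = mu' (Fin.castAdd n ⟨(i : ℕ), hi⟩) - k := congrFun heq ⟨(i : ℕ), hi⟩
      have hci : Fin.castAdd n ⟨(i : ℕ), hi⟩ = i := by
        apply Fin.ext; rfl
      rw [hci] at heq'
      have hg1 : k ≤ mu i := by
        have := mk1 (i : ℕ) (by omega)
        rwa [extZ_lt mu i.isLt, Fin.eta] at this
      have hg2 : k ≤ mu' i := by
        have := mk1' (i : ℕ) (by omega)
        rwa [extZ_lt mu' i.isLt, Fin.eta] at this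
      omega
    · by_cases hi2 : (i : ℕ) < N + n - m
      · have hg1 : k ≤ mu i := by
          have := mk1 (i : ℕ) hi2
          rwa [extZ_lt mu i.isLt, Fin.eta] at this
        have hg2 : k ≤ mu' i := by
          have := mk1' (i : ℕ) hi2
          rwa [extZ_lt mu' i.isLt, Fin.eta] at this
        have hl1 : mu i ≤ k := by
          have := mk2 (i : ℕ) (by omega)
          rwa [extZ_lt mu i.isLt, Fin.eta] at this
        have hl2 : mu' i ≤ k := by
          have := mk2' (i : ℕ) (by omega)
          rwa [extZ_lt mu' i.isLt, Fin.eta] at this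
        omega
      · have hz1 : mu i = 0 := by
          have := mk3 (i : ℕ) (by omega)
          rwa [extZ_lt mu i.isLt, Fin.eta] at this
        have hz2 : mu' i = 0 := by
          have := mk3' (i : ℕ) (by omega)
          rwa [extZ_lt mu' i.isLt, Fin.eta] at this
        omega
  · -- SurjOn
    intro nu hnu
    obtain ⟨hna, hn1, hn2⟩ := hnu
    have hn1a : ∀ j, extZ nu j ≤ L j - k := fun j => (hn1 j).1
    have hn1b : ∀ j, L (j + m) - k ≤ extZ nu j := fun j => (hn1 j).2
    have hn2a : ∀ j, L j - k - k ≤ extZ nu j := fun j => (hn2 j).1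
    have hn2b : ∀ j, extZ nu (j + (n - m)) ≤ L j - k - k := fun j => (hn2 j).2
    set muc : Fin (N + n) → ℕ := fun j =>
      if h : (j : ℕ) < N then nu ⟨(j : ℕ), h⟩ + k
      else if (j : ℕ) < N + n - m then k else 0 with hmuc
    have e : ∀ x : Fin (N + n), muc x = extZ muc (x : ℕ) :=
      fun x => (extZ_lt muc x.isLt).symm
    have hM1 : ∀ j (h : j < N), extZ muc j = extZ nu j + k := by
      intro j h
      rw [extZ_lt muc (show j < N + n by omega), extZ_lt nu h]
      show (if h : j < N then nu ⟨j, h⟩ + k else if j < N + n - m then k else 0)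
        = nu ⟨j, h⟩ + k
      rw [dif_pos h]
    have hM2 : ∀ j, N ≤ j → j < N + n - m → extZ muc j = k := by
      intro j h1 h2
      rw [extZ_lt muc (show j < N + n by omega)]
      show (if h : j < N then nu ⟨j, h⟩ + k else if j < N + n - m then k else 0) = k
      rw [dif_neg (by omega), if_pos h2]
    have hM3 : ∀ j, N + n - m ≤ j → extZ muc j = 0 := by
      intro j h1
      by_cases h : j < N + n
      · rw [extZ_lt muc h]
        show (if h : j < N then nu ⟨j, h⟩ + k else if j < N + n - m then k else 0) = 0
        rw [dif_neg (by omega), if_neg (by omega)]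
      · exact extZ_ge muc h
    refine ⟨muc, ⟨?_, ?_, ?_⟩, ?_⟩
    · -- Antitone muc
      intro a b hab
      have hab' : (a : ℕ) ≤ (b : ℕ) := hab
      show muc b ≤ muc a
      rw [e a, e b]
      by_cases hb : (b : ℕ) < N
      · have ha' : (a : ℕ) < N := by omega
        rw [hM1 _ hb, hM1 _ ha', extZ_lt nu hb, extZ_lt nu ha']
        have : nu ⟨(b : ℕ), hb⟩ ≤ nu ⟨(a : ℕ), ha'⟩ :=
          hna (show (⟨(a : ℕ), ha'⟩ : Fin N) ≤ ⟨(b : ℕ), hb⟩ from hab')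
        omega
      · by_cases hb2 : (b : ℕ) < N + n - m
        · rw [hM2 _ (by omega) hb2]
          by_cases ha' : (a : ℕ) < N
          · rw [hM1 _ ha']; omega
          · rw [hM2 _ (by omega) (by omega)]
        · rw [hM3 _ (by omega)]
          exact Nat.zero_le _
    · -- Interlace m L (extZ muc)
      intro j
      constructor
      · by_cases hj : j < N
        · rw [hM1 _ hj]
          have := hn1a j
          have := hL2k j hj
          omega
        · by_cases hj2 : j < N + n - m
          · rw [hM2 _ (by omega) hj2, hLmid j (by omega) (by omega)]
          · rw [hM3 _ (by omega)]
            exact Nat.zero_le _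
      · by_cases hj : j < N
        · rw [hM1 _ hj]
          have := hn1b j
          omega
        · by_cases hj2 : j < N + n - m
          · rw [hM2 _ (by omega) hj2, hLmid (j + m) (by omega) (by omega)]
          · rw [hM3 _ (by omega), hLhi (j + m) (by omega)]
    · -- Interlace (n-m) (extZ muc) (L - k)
      intro j
      constructor
      · show L j - k ≤ extZ muc j
        by_cases hj : j < N
        · rw [hM1 _ hj]
          have := hn2a j
          omega
        · by_cases hj2 : j < N + n - m
          · rw [hM2 _ (by omega) hj2, hLmid j (by omega) (by omega)]
            omega
          · rw [hM3 _ (by omega)]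
            by_cases hj3 : j < N + n
            · rw [hLmid j (by omega) hj3]; omega
            · rw [hLhi j (by omega)]; omega
      · show extZ muc (j + (n - m)) ≤ L j - k
        by_cases hj : j + (n - m) < N
        · rw [hM1 _ hj]
          have := hn2b j
          have := hL2k j (by omega)
          omega
        · by_cases hj2 : j + (n - m) < N + n - m
          · rw [hM2 _ (by omega) hj2]
            have := hL2k j (by omega)
            omega
          · rw [hM3 _ (by omega)]
            exact Nat.zero_le _
    · -- image equality
      show (fun i : Fin N => muc (Fin.castAdd n i) - k) = nu
      funext i
      have h1' : muc (Fin.castAdd n i) = extZ muc (i : ℕ) :=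
        (extZ_lt muc (show (i : ℕ) < N + n by omega)).symm
      show muc (Fin.castAdd n i) - k = nu i
      rw [h1', hM1 _ i.isLt, extZ_lt nu i.isLt, Fin.eta]
      omega
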